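/- For all positive integers n, summing the two-parameter formula gives the fighting fish count: the sum over i+j = n−1 (i, j ≥ 0) of C(2i+j+1, j)·C(i+2j+1, i)/((i+1)(j+1)) equals 2·C(3n,n)/((n+1)(2n+1)). -/

import Mathlib

open Finset

-- Kummer-type: if p ∣ 2b+1 then v_p(a+1) ≤ v_p(C(2a+b+1, b))
lemma kummer {p : ℕ} (a b : ℕ) (hp : p.Prime) (hpb : p ∣ 2*b+1) :
    (a+1).factorization p ≤ (Nat.choose (2*a+b+1) b).factorization p := by
  haveI : Fact p.Prime := ⟨hp⟩
  set m := (a+1).factorization p with hm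
  rcases Nat.eq_zero_or_pos m with h0 | hmpos
  · simp [h0]
  have hpodd : p ≠ 2 := by rintro rfl; omega
  have hp2 : 2 ≤ p := hp.two_le
  set b' := m + Nat.log p (2*a+b+1) + 1 with hb'
  have hkn : b ≤ 2*a+b+1 := by omega
  have hlog : Nat.log p (2*a+b+1) < b' := by omega
  rw [Nat.factorization_def _ hp, padicValNat_choose hkn hlog]
  -- show Ico 1 (m+1) ⊆ the filtered set
  have hsub : Finset.Ico 1 (m+1) ⊆
      (Finset.Ico 1 b').filter fun i => p ^ i ≤ b % p ^ i + (2*a+b+1 - b) % p ^ i := by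
    intro r hr
    simp only [Finset.mem_Ico, Finset.mem_filter] at hr ⊢
    obtain ⟨hr1, hr2⟩ := hr
    refine ⟨⟨hr1, by omega⟩, ?_⟩
    have hdvd : p ^ r ∣ a + 1 := by
      calc p ^ r ∣ p ^ m := pow_dvd_pow p (by omega)
      _ ∣ a + 1 := Nat.ordProj_dvd _ _
    have hpr1 : 1 < p ^ r := by
      calc 1 < p := hp.one_lt
      _ = p ^ 1 := (pow_one p).symm
      _ ≤ p ^ r := Nat.pow_le_pow_right (by omega) hr1
    -- (2a+1) % p^r = p^r - 1
    obtain ⟨c, hc⟩ := hdvd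
    have hc0 : c ≠ 0 := by rintro rfl; omega
    obtain ⟨c', rfl⟩ : ∃ c', c = c'+1 := ⟨c-1, by omega⟩
    have e1 : p ^ r * (c'+1) = p ^ r * c' + p ^ r := by ring
    have e2 : p ^ r * (2*c'+1) = 2*(p ^ r * c') + p ^ r := by ring
    have h2a1 : 2*a+1 = p ^ r * (2*c'+1) + (p ^ r - 1) := by omega
    have hmod1 : (2*a+1) % p ^ r = p ^ r - 1 := by
      rw [h2a1, Nat.mul_add_mod]
      exact Nat.mod_eq_of_lt (by omega)
    have hmod2 : 1 ≤ b % p ^ r := by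
      rcases Nat.eq_zero_or_pos (b % p ^ r) with h | h
      · exfalso
        have hpb2 : p ∣ b := by
          have : p ^ r ∣ b := Nat.dvd_of_mod_eq_zero h
          exact dvd_trans (dvd_pow_self p (by omega)) this
        have h1 : p ∣ 1 := by
          have := Nat.dvd_sub hpb (hpb2.mul_left 2)
          simpa using this
        have := Nat.le_of_dvd one_pos h1
        omega
      · exact h
    have harg : 2*a+b+1 - b = 2*a+1 := by omega
    rw [harg, hmod1]
    omega
  calc m = (Finset.Ico 1 (m+1)).card := by simp
  _ ≤ _ := Finset.card_le_card hsub

lemma easyval {p : ℕ} (a b : ℕ) (hp : p.Prime) (hpb : ¬ p ∣ 2*b+1) :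
    (a+1).factorization p ≤ (Nat.choose (a+2*b+1) a).factorization p := by
  have key : Nat.choose (a+2*b+1) (a+1) * (a+1) = Nat.choose (a+2*b+1) a * (2*b+1) := by
    have h := Nat.choose_succ_right_eq (a+2*b+1) a
    rwa [show a+2*b+1 - a = 2*b+1 by omega] at h
  have hC1 : Nat.choose (a+2*b+1) (a+1) ≠ 0 := (Nat.choose_pos (by omega)).ne'
  have hC0 : Nat.choose (a+2*b+1) a ≠ 0 := (Nat.choose_pos (by omega)).ne'
  have hval := congrArg (fun m => m.factorization p) key
  simp only [Nat.factorization_mul hC1 (by omega : a+1 ≠ 0),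
    Nat.factorization_mul hC0 (by omega : 2*b+1 ≠ 0), Finsupp.add_apply] at hval
  have h0 : (2*b+1).factorization p = 0 := Nat.factorization_eq_zero_of_not_dvd hpb
  omega

lemma term_dvd (i j : ℕ) :
    ((i+1)*(j+1)) ∣ Nat.choose (2*i+j+1) j * Nat.choose (i+2*j+1) i := by
  have hN1 : Nat.choose (2*i+j+1) j ≠ 0 := (Nat.choose_pos (by omega)).ne'
  have hN2 : Nat.choose (i+2*j+1) i ≠ 0 := (Nat.choose_pos (by omega)).ne'
  rw [← Nat.factorization_le_iff_dvd (by positivity) (mul_ne_zero hN1 hN2),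
    Nat.factorization_mul (by omega : i+1 ≠ 0) (by omega : j+1 ≠ 0),
    Nat.factorization_mul hN1 hN2]
  refine Finsupp.le_def.mpr fun p => ?_
  simp only [Finsupp.add_apply, Finsupp.coe_add, Pi.add_apply]
  by_cases hp : p.Prime
  · by_cases hj : p ∣ 2*j+1
    · -- p odd, p ∤ j+1, use kummer for i+1
      have hj1 : (j+1).factorization p = 0 := by
        apply Nat.factorization_eq_zero_of_not_dvd
        intro h
        have h1 : p ∣ 1 := by
          have := Nat.dvd_sub (h.mul_left 2) hj
          simpa [show 2*(j+1) - (2*j+1) = 1 by omega] using this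
        exact absurd (Nat.le_of_dvd one_pos h1) (by have := hp.two_le; omega)
      have := kummer i j hp hj
      omega
    · by_cases hi : p ∣ 2*i+1
      · have hi1 : (i+1).factorization p = 0 := by
          apply Nat.factorization_eq_zero_of_not_dvd
          intro h
          have h1 : p ∣ 1 := by
            have := Nat.dvd_sub (h.mul_left 2) hi
            simpa [show 2*(i+1) - (2*i+1) = 1 by omega] using this
          exact absurd (Nat.le_of_dvd one_pos h1) (by have := hp.two_le; omega)
        have hk := kummer j i hp hi
        rw [show 2*j+i+1 = i+2*j+1 by omega] at hk
        omega
      · -- both easy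
        have h1 := easyval i j hp hj
        have h2 := easyval j i hp hi
        rw [show j+2*i+1 = 2*i+j+1 by omega] at h2
        omega
  · simp [Nat.factorization_eq_zero_of_not_prime _ hp]

lemma rhs_dvd (n : ℕ) : ((n+1)*(2*n+1)) ∣ 2 * Nat.choose (3*n) n := by
  rcases Nat.eq_zero_or_pos n with rfl | hn
  · norm_num
  have hcop : Nat.Coprime (n+1) (2*n+1) := by
    have h := Nat.dvd_sub ((Nat.gcd_dvd_left (n+1) (2*n+1)).mul_left 2)
      (Nat.gcd_dvd_right (n+1) (2*n+1))
    rw [show 2*(n+1) - (2*n+1) = 1 by omega] at h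
    exact Nat.eq_one_of_dvd_one h
  apply hcop.mul_dvd_of_dvd_of_dvd
  · -- (n+1) | 2C
    have key : Nat.choose (3*n) (n+1) * (n+1) = Nat.choose (3*n) n * (2*n) := by
      have h := Nat.choose_succ_right_eq (3*n) n
      rwa [show 3*n - n = 2*n by omega] at h
    have hd : (n+1) ∣ n * (2 * Nat.choose (3*n) n) := by
      refine ⟨Nat.choose (3*n) (n+1), ?_⟩
      calc n * (2 * Nat.choose (3*n) n) = Nat.choose (3*n) n * (2*n) := by ring
        _ = Nat.choose (3*n) (n+1) * (n+1) := key.symm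
        _ = (n+1) * Nat.choose (3*n) (n+1) := by ring
    have hcop1 : Nat.Coprime (n+1) n := by
      have h := Nat.dvd_sub (Nat.gcd_dvd_left (n+1) n) (Nat.gcd_dvd_right (n+1) n)
      rw [show n+1 - n = 1 by omega] at h
      exact Nat.eq_one_of_dvd_one h
    exact hcop1.dvd_of_dvd_mul_left hd
  · -- (2n+1) | 2C
    have key : Nat.choose (3*n) n * n = Nat.choose (3*n) (n-1) * (2*n+1) := by
      have h := Nat.choose_succ_right_eq (3*n) (n-1)
      rw [show n-1+1 = n by omega, show 3*n - (n-1) = 2*n+1 by omega] at h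
      exact h
    have hd : (2*n+1) ∣ n * Nat.choose (3*n) n := by
      refine ⟨Nat.choose (3*n) (n-1), ?_⟩
      calc n * Nat.choose (3*n) n = Nat.choose (3*n) n * n := by ring
        _ = Nat.choose (3*n) (n-1) * (2*n+1) := key
        _ = (2*n+1) * Nat.choose (3*n) (n-1) := by ring
    have hcop2 : Nat.Coprime (2*n+1) n := by
      have h := Nat.dvd_sub (Nat.gcd_dvd_left (2*n+1) n)
        ((Nat.gcd_dvd_right (2*n+1) n).mul_left 2)
      rw [show 2*n+1 - 2*n = 1 by omega] at h
      exact Nat.eq_one_of_dvd_one h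
    exact Dvd.dvd.mul_left (hcop2.dvd_of_dvd_mul_left hd) 2

noncomputable section

def tq (i j : ℕ) : ℚ :=
  (Nat.choose (2*i+j+1) j * Nat.choose (i+2*j+1) i : ℚ) / ((i+1)*(j+1))

def Tq (n k : ℕ) : ℚ := if k < n then tq k (n-1-k) else 0

def Npq (n k : ℚ) : ℚ :=
  -6*k + 30*k^3 - 24*k^5 - 31*n*k - 42*n*k^2 + 77*n*k^3 + 60*n*k^4 - 28*n*k^5
  - 48*n^2*k - 109*n^2*k^2 + 9*n^2*k^3 + 70*n^2*k^4 - 23*n^3*k - 69*n^3*k^2 - 46*n^3*k^3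

def Dpq (n k : ℚ) : ℚ := n*(n+1)*(2*n+1-k)*(n+1+k)/2

def Rq (n k : ℕ) : ℚ := Npq n k / Dpq n k

def Gq (n k : ℕ) : ℚ := Rq n k * Tq (n+1) k

def c1q (n : ℕ) : ℚ := 2*((n:ℚ)+2)*(2*n+3)

def c0q (n : ℕ) : ℚ := -(3*(3*(n:ℚ)+1)*(3*n+2))

lemma succ_mul_choose_eq' (m k : ℕ) : (m+1) * Nat.choose m k = Nat.choose (m+1) k * (m+1-k) := by
  rcases le_or_gt k m with h | h
  · have h1 : (m+1) * Nat.choose m k = Nat.choose (m+1) (k+1) * (k+1) := by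
      simpa [Nat.succ_eq_add_one] using Nat.add_one_mul_choose_eq m k
    rw [h1, Nat.choose_succ_right_eq]
  · rw [Nat.choose_eq_zero_of_lt h, show m+1-k = 0 by omega]
    simp

set_option maxHeartbeats 2000000 in
lemma step_generic (i j : ℕ) :
    c1q (i+j+1) * tq i (j+1) + c0q (i+j+1) * tq i j
      = Rq (i+j+1) (i+1) * tq (i+1) j - Rq (i+j+1) i * tq i (j+1) := by
  have hi1 : ((i:ℚ)+1) ≠ 0 := by positivity
  have hj1 : ((j:ℚ)+1) ≠ 0 := by positivity
  -- ℕ product identities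
  have n1 : (2*i+j+2) * Nat.choose (2*i+j+1) j = Nat.choose (2*i+j+2) (j+1) * (j+1) := by
    have h := Nat.add_one_mul_choose_eq (2*i+j+1) j
    rwa [show 2*i+j+1+1 = 2*i+j+2 by omega] at h
  have n2 : (i+2*j+2) * Nat.choose (i+2*j+1) i = Nat.choose (i+2*j+2) (i+1) * (i+1) := by
    have h := Nat.add_one_mul_choose_eq (i+2*j+1) i
    rwa [show i+2*j+1+1 = i+2*j+2 by omega] at h
  have n3 : (i+2*j+2) * Nat.choose (i+2*j+1) i = Nat.choose (i+2*j+2) i * (2*j+2) := by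
    have h := succ_mul_choose_eq' (i+2*j+1) i
    rwa [show i+2*j+1+1 = i+2*j+2 by omega, show i+2*j+2-i = 2*j+2 by omega] at h
  have n4 : (i+2*j+3) * Nat.choose (i+2*j+2) i = Nat.choose (i+2*j+3) i * (2*j+3) := by
    have h := succ_mul_choose_eq' (i+2*j+2) i
    rwa [show i+2*j+2+1 = i+2*j+3 by omega, show i+2*j+3-i = 2*j+3 by omega] at h
  have n5 : (2*i+j+3) * Nat.choose (2*i+j+2) j = Nat.choose (2*i+j+3) j * (2*i+3) := by
    have h := succ_mul_choose_eq' (2*i+j+2) j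
    rwa [show 2*i+j+2+1 = 2*i+j+3 by omega, show 2*i+j+3-j = 2*i+3 by omega] at h
  have n6 : (2*i+j+2) * Nat.choose (2*i+j+1) j = Nat.choose (2*i+j+2) j * (2*i+2) := by
    have h := succ_mul_choose_eq' (2*i+j+1) j
    rwa [show 2*i+j+1+1 = 2*i+j+2 by omega, show 2*i+j+2-j = 2*i+2 by omega] at h
  -- cast to ℚ and solve for the derived binomials
  have cast_eq : ∀ a b : ℕ, a = b → (a : ℚ) = (b : ℚ) := fun a b h => by exact_mod_cast h
  have q1 : (Nat.choose (2*i+j+2) (j+1) : ℚ)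
      = (Nat.choose (2*i+j+1) j : ℚ) * (2*(i:ℚ)+j+2) / ((j:ℚ)+1) := by
    rw [eq_div_iff hj1]
    have h := cast_eq _ _ n1; push_cast at h; linear_combination -h
  have q2 : (Nat.choose (i+2*j+2) (i+1) : ℚ)
      = (Nat.choose (i+2*j+1) i : ℚ) * ((i:ℚ)+2*j+2) / ((i:ℚ)+1) := by
    rw [eq_div_iff hi1]
    have h := cast_eq _ _ n2; push_cast at h; linear_combination -h
  have q3 : (Nat.choose (i+2*j+2) i : ℚ)
      = (Nat.choose (i+2*j+1) i : ℚ) * ((i:ℚ)+2*j+2) / (2*(j:ℚ)+2) := by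
    rw [eq_div_iff (by positivity)]
    have h := cast_eq _ _ n3; push_cast at h; linear_combination -h
  have q4 : (Nat.choose (i+2*j+3) i : ℚ)
      = (Nat.choose (i+2*j+2) i : ℚ) * ((i:ℚ)+2*j+3) / (2*(j:ℚ)+3) := by
    rw [eq_div_iff (by positivity)]
    have h := cast_eq _ _ n4; push_cast at h; linear_combination -h
  have q5 : (Nat.choose (2*i+j+3) j : ℚ)
      = (Nat.choose (2*i+j+2) j : ℚ) * (2*(i:ℚ)+j+3) / (2*(i:ℚ)+3) := by
    rw [eq_div_iff (by positivity)]
    have h := cast_eq _ _ n5; push_cast at h; linear_combination -h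
  have q6 : (Nat.choose (2*i+j+2) j : ℚ)
      = (Nat.choose (2*i+j+1) j : ℚ) * (2*(i:ℚ)+j+2) / (2*(i:ℚ)+2) := by
    rw [eq_div_iff (by positivity)]
    have h := cast_eq _ _ n6; push_cast at h; linear_combination -h
  -- rewrite Rq into subtraction-free form
  have eR1 : Rq (i+j+1) i
      = Npq ((i:ℚ)+j+1) i / (((i:ℚ)+j+1)*((i:ℚ)+j+2)*((i:ℚ)+2*j+3)*(2*(i:ℚ)+j+2)/2) := by
    simp only [Rq, Dpq]
    congr 1
    · push_cast; ring
    · push_cast; ring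
  have eR2 : Rq (i+j+1) (i+1)
      = Npq ((i:ℚ)+j+1) ((i:ℚ)+1)
        / (((i:ℚ)+j+1)*((i:ℚ)+j+2)*((i:ℚ)+2*j+2)*(2*(i:ℚ)+j+3)/2) := by
    simp only [Rq, Dpq]
    congr 1
    · push_cast; ring
    · push_cast; ring
  -- unfold and rewrite
  simp only [tq, c1q, c0q]
  rw [show 2*i+(j+1)+1 = 2*i+j+2 by omega, show i+2*(j+1)+1 = i+2*j+3 by omega,
    show 2*(i+1)+j+1 = 2*i+j+3 by omega, show (i+1)+2*j+1 = i+2*j+2 by omega]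
  rw [eR1, eR2, q1, q5, q6, q4, q3, q2]
  simp only [Npq]
  push_cast
  have d1 : ((i:ℚ)+(j:ℚ)+1) ≠ 0 := by positivity
  have d2 : ((i:ℚ)+(j:ℚ)+2) ≠ 0 := by positivity
  have d3 : ((i:ℚ)+2*(j:ℚ)+3) ≠ 0 := by positivity
  have d4 : (2*(i:ℚ)+(j:ℚ)+2) ≠ 0 := by positivity
  have d5 : ((i:ℚ)+2*(j:ℚ)+2) ≠ 0 := by positivity
  have d6 : (2*(i:ℚ)+(j:ℚ)+3) ≠ 0 := by positivity
  have d7 : ((j:ℚ)+2) ≠ 0 := by positivity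
  have d8 : ((i:ℚ)+2) ≠ 0 := by positivity
  have d9 : (2*(j:ℚ)+2) ≠ 0 := by positivity
  have d10 : (2*(j:ℚ)+3) ≠ 0 := by positivity
  have d11 : (2*(i:ℚ)+2) ≠ 0 := by positivity
  have d12 : (2*(i:ℚ)+3) ≠ 0 := by positivity
  field_simp
  ring

lemma Rq_nn (n : ℕ) (hn : 1 ≤ n) : Rq n n = -c1q n := by
  have hn0 : (0:ℚ) < (n:ℚ) := by exact_mod_cast hn
  have hD : Dpq (n:ℚ) (n:ℚ) = (n:ℚ)*((n:ℚ)+1)*((n:ℚ)+1)*(2*(n:ℚ)+1)/2 := by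
    simp only [Dpq]; ring
  have hDne : Dpq (n:ℚ) (n:ℚ) ≠ 0 := by rw [hD]; positivity
  simp only [Rq]
  rw [div_eq_iff hDne]
  simp only [Npq, Dpq, c1q]
  ring

lemma step_all (n k : ℕ) (hn : 1 ≤ n) (hk : k ≤ n) :
    c1q n * Tq (n+1) k + c0q n * Tq n k = Gq n (k+1) - Gq n k := by
  rcases lt_or_eq_of_le hk with hlt | rfl
  · obtain ⟨j, rfl⟩ : ∃ j, n = k + j + 1 := ⟨n-1-k, by omega⟩
    have e1 : Tq (k+j+1+1) k = tq k (j+1) := by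
      rw [Tq, if_pos (by omega), show k+j+1+1-1-k = j+1 by omega]
    have e2 : Tq (k+j+1) k = tq k j := by
      rw [Tq, if_pos (by omega), show k+j+1-1-k = j by omega]
    have e3 : Tq (k+j+1+1) (k+1) = tq (k+1) j := by
      rw [Tq, if_pos (by omega), show k+j+1+1-1-(k+1) = j by omega]
    rw [Gq, Gq, e1, e2, e3]
    exact step_generic k j
  · have e1 : Tq (k+1) k = tq k 0 := by
      rw [Tq, if_pos (by omega), show k+1-1-k = 0 by omega]
    have e2 : Tq k k = 0 := by rw [Tq, if_neg (by omega)]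
    have e3 : Tq (k+1) (k+1) = 0 := by rw [Tq, if_neg (by omega)]
    rw [Gq, Gq, e1, e2, e3, Rq_nn k hn]
    ring

lemma recurrence (n : ℕ) (hn : 1 ≤ n) :
    c1q n * (∑ k ∈ range (n+1), Tq (n+1) k) + c0q n * (∑ k ∈ range n, Tq n k) = 0 := by
  have h1 : ∑ k ∈ range n, Tq n k = ∑ k ∈ range (n+1), Tq n k := by
    rw [Finset.sum_range_succ, Tq, if_neg (by omega)]; ring
  rw [h1, Finset.mul_sum, Finset.mul_sum, ← Finset.sum_add_distrib]
  have h2 : ∀ k ∈ range (n+1), c1q n * Tq (n+1) k + c0q n * Tq n k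
      = Gq n (k+1) - Gq n k := by
    intro k hk
    exact step_all n k hn (Nat.lt_succ_iff.mp (Finset.mem_range.mp hk))
  rw [Finset.sum_congr rfl h2, Finset.sum_range_sub (Gq n)]
  have hG0 : Gq n 0 = 0 := by
    simp only [Gq, Rq, Npq]
    norm_num
  have hGn : Gq n (n+1) = 0 := by
    simp only [Gq, Tq, if_neg (lt_irrefl (n+1))]
    ring
  rw [hG0, hGn]; ring

lemma chooseId (n : ℕ) :
    ((n:ℚ)+1)*(2*(n:ℚ)+1)*(2*(n:ℚ)+2) * (Nat.choose (3*n+3) (n+1) : ℚ)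
      = (3*(n:ℚ)+1)*(3*(n:ℚ)+2)*(3*(n:ℚ)+3) * (Nat.choose (3*n) n : ℚ) := by
  have h1 : Nat.choose (3*n) n * n.factorial * (2*n).factorial = (3*n).factorial := by
    have h := Nat.choose_mul_factorial_mul_factorial (show n ≤ 3*n by omega)
    rwa [show 3*n-n = 2*n by omega] at h
  have h2 : Nat.choose (3*n+3) (n+1) * (n+1).factorial * (2*n+2).factorial
      = (3*n+3).factorial := by
    have h := Nat.choose_mul_factorial_mul_factorial (show n+1 ≤ 3*n+3 by omega)
    rwa [show 3*n+3-(n+1) = 2*n+2 by omega] at h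
  have f1 : (n+1).factorial = (n+1) * n.factorial := Nat.factorial_succ n
  have f2 : (2*n+2).factorial = (2*n+2)*((2*n+1)*(2*n).factorial) := by
    rw [show 2*n+2 = 2*n+1+1 by omega, Nat.factorial_succ, Nat.factorial_succ]
  have f3 : (3*n+3).factorial = (3*n+3)*((3*n+2)*((3*n+1)*(3*n).factorial)) := by
    rw [show 3*n+3 = 3*n+2+1 by omega, Nat.factorial_succ,
      show 3*n+2 = 3*n+1+1 by omega, Nat.factorial_succ, Nat.factorial_succ]
  rw [f1, f2, f3] at h2
  have hnf : (n.factorial : ℚ) ≠ 0 := by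
    exact_mod_cast (Nat.factorial_pos n).ne'
  have h2nf : ((2*n).factorial : ℚ) ≠ 0 := by
    exact_mod_cast (Nat.factorial_pos (2*n)).ne'
  have cast_eq : ∀ a b : ℕ, a = b → (a : ℚ) = (b : ℚ) := fun a b h => by exact_mod_cast h
  have q1 := cast_eq _ _ h1
  have q2 := cast_eq _ _ h2
  push_cast at q1 q2
  have hC : (Nat.choose (3*n) n : ℚ) = ((3*n).factorial : ℚ) / (n.factorial * (2*n).factorial) := by
    rw [eq_div_iff (by exact mul_ne_zero hnf h2nf)]
    linear_combination q1
  rw [hC]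
  field_simp
  apply mul_left_cancel₀ (show ((n:ℚ)+1) ≠ 0 by positivity)
  linear_combination q2

lemma Sq_eq (n : ℕ) (hn : 1 ≤ n) :
    ∑ k ∈ range n, Tq n k
      = 2 * (Nat.choose (3*n) n : ℚ) / (((n:ℚ)+1)*(2*(n:ℚ)+1)) := by
  induction n, hn using Nat.le_induction with
  | base =>
    rw [Finset.sum_range_one, Tq, if_pos one_pos]
    norm_num [tq, Nat.choose]
  | succ n hn ih =>
    have hrec := recurrence n hn
    rw [ih] at hrec
    have hc1 : c1q n ≠ 0 := by
      have h : (0:ℚ) < 2*((n:ℚ)+2)*(2*(n:ℚ)+3) := by positivity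
      simpa [c1q] using h.ne'
    apply mul_left_cancel₀ hc1
    rw [show c1q n * (∑ k ∈ range (n+1), Tq (n+1) k)
        = -(c0q n * (2 * (Nat.choose (3*n) n : ℚ) / (((n:ℚ)+1)*(2*(n:ℚ)+1))))
        from by linarith [hrec]]
    have key := chooseId n
    rw [show 3*(n+1) = 3*n+3 by omega]
    push_cast
    simp only [c0q, c1q]
    have d1 : ((n:ℚ)+1) ≠ 0 := by positivity
    have d2 : (2*(n:ℚ)+1) ≠ 0 := by positivity
    have d3 : ((n:ℚ)+1+1) ≠ 0 := by positivity
    have d4 : (2*((n:ℚ)+1)+1) ≠ 0 := by positivity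
    have hC' : (Nat.choose (3*n+3) (n+1) : ℚ)
        = (3*(n:ℚ)+1)*(3*(n:ℚ)+2)*(3*(n:ℚ)+3) * (Nat.choose (3*n) n : ℚ)
          / (((n:ℚ)+1)*(2*(n:ℚ)+1)*(2*(n:ℚ)+2)) := by
      rw [eq_div_iff (by positivity)]
      linear_combination key
    rw [hC']
    field_simp
    ring


theorem sum_two_param_eq_fighting_fish (n : ℕ) (hn : 0 < n) :
    ∑ i ∈ Finset.range n,
      Nat.choose (2 * i + (n - 1 - i) + 1) (n - 1 - i) *
        Nat.choose (i + 2 * (n - 1 - i) + 1) i / ((i + 1) * ((n - 1 - i) + 1)) =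
    2 * Nat.choose (3 * n) n / ((n + 1) * (2 * n + 1)) := by
  have hinj : ∀ a b : ℕ, (a:ℚ) = (b:ℚ) → a = b := fun a b h => by exact_mod_cast h
  apply hinj
  rw [Nat.cast_sum]
  have hL : ∀ i ∈ range n,
      ((Nat.choose (2*i+(n-1-i)+1) (n-1-i) * Nat.choose (i+2*(n-1-i)+1) i
        / ((i+1)*((n-1-i)+1)) : ℕ) : ℚ) = Tq n i := by
    intro i hi
    have hi' : i < n := mem_range.mp hi
    rw [Nat.cast_div (term_dvd i (n-1-i)) (by push_cast; positivity)]
    rw [Tq, if_pos hi', tq]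
    push_cast
    ring
  rw [Finset.sum_congr rfl hL, Sq_eq n hn,
    Nat.cast_div (rhs_dvd n) (by push_cast; positivity)]
  push_cast
  ring
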